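/- For real numbers a, b and a nonnegative integer n, the q-binomial theorem holds: (ab; q)_n = \sum_{k=0}^{n} \binom{n}{k}_q b^k (a; q)_k (b; q)_{n-k}, where (x;q)_m = \prod_{j=0}^{m-1}(1 - x q^j) and \binom{n}{k}_q = (q;q)_n / ((q;q)_{n-k}(q;q)_k). -/
import Mathlib

/-- The q-Pochhammer symbol `(a; q)_n = ∏_{j=0}^{n-1} (1 - a q^j)`. -/
noncomputable def qPoch (a q : ℝ) (n : ℕ) : ℝ :=
  ∏ j ∈ Finset.range n, (1 - a * q ^ j)

/-- The Gaussian binomial coefficient `[n k]_q = (q;q)_n / ((q;q)_{n-k} (q;q)_k)`. -/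
noncomputable def qBinom (q : ℝ) (n k : ℕ) : ℝ :=
  qPoch q q n / (qPoch q q (n - k) * qPoch q q k)

lemma qPoch_succ (a q : ℝ) (n : ℕ) :
    qPoch a q (n + 1) = qPoch a q n * (1 - a * q ^ n) :=
  Finset.prod_range_succ _ _

lemma one_sub_ne {q : ℝ} (hq0 : 0 < q) (hq1 : q < 1) (j : ℕ) :
    (1 : ℝ) - q * q ^ j ≠ 0 := by
  have h1 : q * q ^ j < 1 := by
    calc q * q ^ j = q ^ (j + 1) := by ring
    _ < 1 := pow_lt_one₀ hq0.le hq1 (Nat.succ_ne_zero j)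
  linarith

lemma qPoch_qq_ne {q : ℝ} (hq0 : 0 < q) (hq1 : q < 1) (m : ℕ) :
    qPoch q q m ≠ 0 := by
  unfold qPoch
  exact Finset.prod_ne_zero_iff.mpr fun j _ => one_sub_ne hq0 hq1 j

lemma qPoch_zero (a q : ℝ) : qPoch a q 0 = 1 := rfl

lemma qBinom_zero {q : ℝ} (hq0 : 0 < q) (hq1 : q < 1) (n : ℕ) :
    qBinom q n 0 = 1 := by
  unfold qBinom
  rw [Nat.sub_zero, qPoch_zero, mul_one,
    div_self (qPoch_qq_ne hq0 hq1 n)]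

lemma qBinom_self {q : ℝ} (hq0 : 0 < q) (hq1 : q < 1) (n : ℕ) :
    qBinom q n n = 1 := by
  unfold qBinom
  rw [Nat.sub_self, qPoch_zero, one_mul,
    div_self (qPoch_qq_ne hq0 hq1 n)]

lemma qBinom_pascal {q : ℝ} (hq0 : 0 < q) (hq1 : q < 1) {n k : ℕ} (hk : k < n) :
    qBinom q (n + 1) (k + 1)
      = qBinom q n (k + 1) + q ^ (n - k) * qBinom q n k := by
  obtain ⟨m, rfl⟩ : ∃ m, n = k + m + 1 := ⟨n - k - 1, by omega⟩
  unfold qBinom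
  rw [show k + m + 1 + 1 - (k + 1) = m + 1 by omega,
    show k + m + 1 - (k + 1) = m by omega,
    show k + m + 1 - k = m + 1 by omega,
    show k + m + 1 + 1 = (k + m + 1) + 1 from rfl,
    qPoch_succ q q (k + m + 1), qPoch_succ q q m, qPoch_succ q q k]
  have h0 := qPoch_qq_ne hq0 hq1 m
  have h1 := qPoch_qq_ne hq0 hq1 k
  have h2 := one_sub_ne hq0 hq1 m
  have h3 := one_sub_ne hq0 hq1 k
  field_simp
  ring

theorem q_binomial_formula (q a b : ℝ) (hq0 : 0 < q) (hq1 : q < 1) (n : ℕ) :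
    qPoch (a * b) q n =
      ∑ k ∈ Finset.range (n + 1),
        qBinom q n k * b ^ k * qPoch a q k * qPoch b q (n - k) := by
  induction n with
  | zero => simp [qPoch, qBinom]
  | succ n ih =>
    rw [qPoch_succ, ih, Finset.sum_mul]
    have hT : ∀ k ∈ Finset.range (n + 1),
        qBinom q n k * b ^ k * qPoch a q k * qPoch b q (n - k) * (1 - a * b * q ^ n)
          = qBinom q n k * b ^ k * qPoch a q k * qPoch b q (n + 1 - k)
            + qBinom q n k * b ^ (k + 1) * qPoch a q (k + 1) * qPoch b q (n - k)
              * q ^ (n - k) := by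
      intro k hk
      rw [Finset.mem_range] at hk
      obtain ⟨m, rfl⟩ : ∃ m, n = k + m := ⟨n - k, by omega⟩
      rw [show k + m + 1 - k = m + 1 by omega, show k + m - k = m by omega,
        qPoch_succ b q m, qPoch_succ a q k]
      ring
    rw [Finset.sum_congr rfl hT, Finset.sum_add_distrib,
      Finset.sum_range_succ' (fun k =>
        qBinom q n k * b ^ k * qPoch a q k * qPoch b q (n + 1 - k)) n,
      Finset.sum_range_succ (fun k =>
        qBinom q n k * b ^ (k + 1) * qPoch a q (k + 1) * qPoch b q (n - k)
          * q ^ (n - k)) n,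
      Finset.sum_range_succ' (fun k =>
        qBinom q (n + 1) k * b ^ k * qPoch a q k * qPoch b q (n + 1 - k)) (n + 1),
      Finset.sum_range_succ (fun k =>
        qBinom q (n + 1) (k + 1) * b ^ (k + 1) * qPoch a q (k + 1)
          * qPoch b q (n + 1 - (k + 1))) n]
    have h0 : qBinom q n 0 = qBinom q (n + 1) 0 := by
      rw [qBinom_zero hq0 hq1, qBinom_zero hq0 hq1]
    have hn : qBinom q n n * b ^ (n + 1) * qPoch a q (n + 1) * qPoch b q (n - n)
        * q ^ (n - n)
        = qBinom q (n + 1) (n + 1) * b ^ (n + 1) * qPoch a q (n + 1)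
          * qPoch b q (n + 1 - (n + 1)) := by
      rw [qBinom_self hq0 hq1, qBinom_self hq0 hq1, Nat.sub_self, Nat.sub_self]
      simp [qPoch_zero]
    have hmid : ∑ k ∈ Finset.range n,
        qBinom q (n + 1) (k + 1) * b ^ (k + 1) * qPoch a q (k + 1)
          * qPoch b q (n + 1 - (k + 1))
        = ∑ k ∈ Finset.range n,
          (qBinom q n (k + 1) * b ^ (k + 1) * qPoch a q (k + 1)
              * qPoch b q (n + 1 - (k + 1))
            + qBinom q n k * b ^ (k + 1) * qPoch a q (k + 1) * qPoch b q (n - k)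
              * q ^ (n - k)) := by
      refine Finset.sum_congr rfl fun k hk => ?_
      rw [Finset.mem_range] at hk
      rw [qBinom_pascal hq0 hq1 hk, show n + 1 - (k + 1) = n - k by omega]
      ring

    rw [hmid, Finset.sum_add_distrib, h0, hn]
    ring
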